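/- Let V be a commutative unital quantale, F : Type u ⥤ Type u a functor, and L a lifting of F to V-Cat that preserves initial morphisms and corestricts to symmetric V-categories, i.e. L c is symmetric for every V-category (Z,c). Let (X,a) be a V-category and α : X → F.obj X an L-coalgebra, i.e. a x y ≤ L a (α x) (α y) for all x,y. Define the behavioural distance bd(x,y) = ⨆ { b (f x) (f y) | Y : Type u, b a V-category structure on Y, β : Y → F.obj Y with b y y' ≤ L b (β y) (β y') for all y,y', and f : X → Y a V-functor (X,a) → (Y,b) with β ∘ f = F.map f ∘ α }. Then bd is symmetric: bd(x,y) = bd(y,x) for all x,y ∈ X. -/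

import Mathlib

universe u v w

open CategoryTheory

/-- `V` is a (commutative unital) quantale: the tensor distributes over suprema. -/
def QuantaleLaw (V : Type u) [CompleteLattice V] [CommMonoid V] : Prop :=
  ∀ (u : V) (s : Set V), u * sSup s = ⨆ v ∈ s, u * v

/-- Internal hom of the quantale: `hom u w = ⨆ {v | u ⊗ v ≤ w}`. -/
def qhom {V : Type u} [CompleteLattice V] [CommMonoid V] (u w : V) : V :=
  sSup {v | u * v ≤ w}

/-- `a` is a `V`-category structure on `X`. -/
def IsVCat {V : Type u} [CompleteLattice V] [CommMonoid V] {X : Type v}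
    (a : X → X → V) : Prop :=
  (∀ x, (1 : V) ≤ a x x) ∧ ∀ x y z, a x y * a y z ≤ a x z

/-- `f` is a `V`-functor from `(X,a)` to `(Y,b)`. -/
def IsVFunctor {V : Type u} [CompleteLattice V] {X : Type v} {Y : Type w}
    (a : X → X → V) (b : Y → Y → V) (f : X → Y) : Prop :=
  ∀ x y, a x y ≤ b (f x) (f y)

/-- `f` is an initial `V`-functor from `(X,a)` to `(Y,b)`. -/
def IsInitialVFunctor {V : Type u} {X : Type v} {Y : Type w}
    (a : X → X → V) (b : Y → Y → V) (f : X → Y) : Prop :=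
  ∀ x y, a x y = b (f x) (f y)

/-- The `V`-category structure of the power `V^κ`. -/
def powStr {V : Type u} [CompleteLattice V] [CommMonoid V] (κ : Type v)
    (p q : κ → V) : V :=
  ⨅ i, qhom (p i) (q i)

/-- The graph of a function, as a `V`-relation: `k` on the graph, `⊥` elsewhere. -/
def fnGraph {V : Type u} [CompleteLattice V] [CommMonoid V] {X : Type v} {Y : Type w}
    (f : X → Y) : X → Y → V :=
  fun x y => ⨆ _ : f x = y, (1 : V)

/-- A lifting of a `Set`-functor `F` to `V`-Cat. -/
structure Lifting (V : Type u) [CompleteLattice V] [CommMonoid V]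
    (F : Type u ⥤ Type u) where
  str : ∀ {X : Type u}, (X → X → V) → F.obj X → F.obj X → V
  isVCat : ∀ {X : Type u} (a : X → X → V), IsVCat a → IsVCat (str a)
  map : ∀ {X Y : Type u} (a : X → X → V) (b : Y → Y → V) (f : X → Y),
    IsVCat a → IsVCat b → IsVFunctor a b f →
    IsVFunctor (str a) (str b) (F.map (TypeCat.ofHom f))

/-- A `κ`-ary `V`-valued predicate lifting for a `Set`-functor `F`. -/
structure PredLifting (V : Type u) [CompleteLattice V] [CommMonoid V]
    (F : Type u ⥤ Type u) (κ : Type u) where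
  app : ∀ {X : Type u}, (X → κ → V) → F.obj X → V
  natural : ∀ {X Y : Type u} (f : X → Y) (p : Y → κ → V) (t : F.obj X),
    app (fun x => p (f x)) t = app p (F.map (TypeCat.ofHom f) t)

/-- A predicate lifting is monotone if it preserves the pointwise order of predicates. -/
def PredLifting.Mono {V : Type u} [CompleteLattice V] [CommMonoid V]
    {F : Type u ⥤ Type u} {κ : Type u} (lam : PredLifting V F κ) : Prop :=
  ∀ (X : Type u) (p q : X → κ → V), (∀ x i, p x i ≤ q x i) →
    ∀ t, lam.app p t ≤ lam.app q t

/-- A predicate lifting is compatible with a lifting `L` if it lifts `V`-functorial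
predicates to `V`-functorial predicates. -/
def Compatible {V : Type u} [CompleteLattice V] [CommMonoid V] {F : Type u ⥤ Type u}
    (L : Lifting V F) {κ : Type u} (lam : PredLifting V F κ) : Prop :=
  ∀ (X : Type u) (a : X → X → V), IsVCat a → ∀ f : X → κ → V,
    IsVFunctor a (powStr κ) f → IsVFunctor (L.str a) qhom (lam.app f)

/-- The Kantorovich `V`-category structure on `F.obj X` induced by a family of
predicate liftings. -/
noncomputable def kantStr {V : Type u} [CompleteLattice V] [CommMonoid V]
    {F : Type u ⥤ Type u} {ι : Type v} {κ : ι → Type u}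
    (Λ : ∀ l, PredLifting V F (κ l)) {X : Type u} (a : X → X → V)
    (t s : F.obj X) : V :=
  ⨅ l, ⨅ f : {f : X → κ l → V // IsVFunctor a (powStr (κ l)) f},
    qhom ((Λ l).app f.1 t) ((Λ l).app f.1 s)

/-- A generalized predicate lifting for `(F, L)` with parameter `V`-category `(A, α)`. -/
structure GenPredLifting (V : Type u) [CompleteLattice V] [CommMonoid V]
    (F : Type u ⥤ Type u) (L : Lifting V F) (A : Type u) (α : A → A → V) where
  app : ∀ {Z : Type u}, (Z → Z → V) → (Z → A) → F.obj Z → V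
  isVFunctor : ∀ {Z : Type u} (c : Z → Z → V), IsVCat c → ∀ f : Z → A,
    IsVFunctor c α f → IsVFunctor (L.str c) qhom (app c f)
  natural : ∀ {Z Z' : Type u} (c : Z → Z → V) (c' : Z' → Z' → V),
    IsVCat c → IsVCat c' → ∀ (u : Z → Z'), IsVFunctor c c' u →
    ∀ (g : Z' → A), IsVFunctor c' α g →
    ∀ t : F.obj Z, app c (fun z => g (u z)) t = app c' g (F.map (TypeCat.ofHom u) t)

/-- A lax extension of a `Set`-functor `F` to `V`-Rel. -/
structure LaxExt (V : Type u) [CompleteLattice V] [CommMonoid V]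
    (F : Type u ⥤ Type u) where
  ext : ∀ {X Y : Type u}, (X → Y → V) → F.obj X → F.obj Y → V
  mono : ∀ {X Y : Type u} (r r' : X → Y → V), (∀ x y, r x y ≤ r' x y) →
    ∀ t s, ext r t s ≤ ext r' t s
  comp : ∀ {X Y Z : Type u} (r : X → Y → V) (s : Y → Z → V)
    (t : F.obj X) (w : F.obj Z),
    (⨆ u : F.obj Y, ext r t u * ext s u w) ≤
      ext (fun x z => ⨆ y, r x y * s y z) t w
  lax_map : ∀ {X Y : Type u} (f : X → Y) (t : F.obj X),
    (1 : V) ≤ ext (fnGraph f) t (F.map (TypeCat.ofHom f) t)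
  lax_map_op : ∀ {X Y : Type u} (f : X → Y) (t : F.obj X),
    (1 : V) ≤ ext (fun y x => fnGraph f x y) (F.map (TypeCat.ofHom f) t) t

/-- for a lifting preserving initial morphisms that corestricts to
symmetric `V`-categories, behavioural distance on any coalgebra is symmetric. -/
theorem stmt_19 {V : Type u} [CompleteLattice V] [CommMonoid V] (hV : QuantaleLaw V)
    {F : Type u ⥤ Type u} (L : Lifting V F)
    (hpres : ∀ {X Y : Type u} (a : X → X → V) (b : Y → Y → V) (f : X → Y),
      IsVCat a → IsVCat b → IsInitialVFunctor a b f →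
      IsInitialVFunctor (L.str a) (L.str b) (F.map (TypeCat.ofHom f)))
    (hsymL : ∀ (Z : Type u) (c : Z → Z → V), IsVCat c →
      ∀ t s : F.obj Z, L.str c t s = L.str c s t)
    {X : Type u} (a : X → X → V) (ha : IsVCat a)
    (α : X → F.obj X) (hα : IsVFunctor a (L.str a) α)
    (bd : X → X → V)
    (hbd : ∀ x y : X, bd x y = sSup { v : V |
      ∃ (Y : Type u) (b : Y → Y → V) (β : Y → F.obj Y) (f : X → Y),
        IsVCat b ∧ IsVFunctor b (L.str b) β ∧ IsVFunctor a b f ∧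
        (∀ z, β (f z) = F.map (TypeCat.ofHom f) (α z)) ∧ v = b (f x) (f y) }) :
    ∀ x y, bd x y = bd y x := by
  classical
  -- multiplication is monotone
  have hmul_r : ∀ (u : V) {v v' : V}, v ≤ v' → u * v ≤ u * v' := by
    intro u v v' h
    have h1 := hV u {v, v'}
    have h2 : sSup ({v, v'} : Set V) = v' := by
      rw [sSup_pair, sup_eq_right.mpr h]
    rw [h2] at h1
    rw [h1]
    exact le_iSup₂ (f := fun w (_ : w ∈ ({v, v'} : Set V)) => u * w) v (by simp)
  have hmul : ∀ {u u' v v' : V}, u ≤ u' → v ≤ v' → u * v ≤ u' * v' := by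
    intro u u' v v' h1 h2
    calc u * v ≤ u * v' := hmul_r u h2
      _ = v' * u := mul_comm _ _
      _ ≤ v' * u' := hmul_r v' h1
      _ = u' * v' := mul_comm _ _
  -- distribution over suprema over S-type index
  have hdistr : ∀ (u : V) (T : Set (X → X → V)) (g : (X → X → V) → V) (w : V),
      (∀ c ∈ T, u * g c ≤ w) → u * (⨆ c ∈ T, g c) ≤ w := by
    intro u T g w h
    have h1 : (⨆ c ∈ T, g c) = sSup (g '' T) := by
      rw [sSup_image]
    rw [h1, hV u (g '' T)]
    refine iSup₂_le ?_
    rintro v ⟨c, hc, rfl⟩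
    exact h c hc
  have hid : ∀ t : F.obj X, F.map (TypeCat.ofHom (id : X → X)) t = t := by
    intro t
    have h1 : TypeCat.ofHom (id : X → X) = 𝟙 X := rfl
    rw [h1, F.map_id]
    rfl
  -- monotonicity of L
  have Lmono : ∀ {c d : X → X → V}, IsVCat c → IsVCat d → (∀ x y, c x y ≤ d x y) →
      ∀ t s, L.str c t s ≤ L.str d t s := by
    intro c d hc hd h t s
    have h1 : IsVFunctor c d (id : X → X) := fun x y => h x y
    have h2 := L.map c d id hc hd h1 t s
    simp only [hid] at h2
    exact h2
  -- the set S
  set S : Set (X → X → V) :=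
    {c | IsVCat c ∧ (∀ x y, a x y ≤ c x y) ∧ (∀ x y, c x y ≤ L.str c (α x) (α y))}
    with hSdef
  have haS : a ∈ S := ⟨ha, fun _ _ => le_rfl, hα⟩
  -- bd is the sup over S
  have hbd' : ∀ x y, bd x y = ⨆ c ∈ S, c x y := by
    intro x y
    rw [hbd]
    apply le_antisymm
    · apply sSup_le
      rintro v ⟨Y, b, β, f, hb, hβ, hf, hcomm, rfl⟩
      set a' : X → X → V := fun x y => b (f x) (f y) with ha'def
      have ha' : IsVCat a' := ⟨fun x => hb.1 (f x), fun x y z => hb.2 (f x) (f y) (f z)⟩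
      have hinit : IsInitialVFunctor a' b f := fun _ _ => rfl
      have hLi := hpres a' b f ha' hb hinit
      have hmem : a' ∈ S := by
        refine ⟨ha', hf, ?_⟩
        intro x y
        calc a' x y ≤ L.str b (β (f x)) (β (f y)) := hβ (f x) (f y)
          _ = L.str b (F.map (TypeCat.ofHom f) (α x)) (F.map (TypeCat.ofHom f) (α y)) := by rw [hcomm, hcomm]
          _ = L.str a' (α x) (α y) := (hLi (α x) (α y)).symm
      exact le_iSup₂ (f := fun c (_ : c ∈ S) => c x y) a' hmem
    · refine iSup₂_le ?_
      intro c hc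
      refine le_sSup ⟨X, c, α, id, hc.1, hc.2.2, hc.2.1, fun z => ?_, rfl⟩
      rw [hid]
      rfl
  -- d = pointwise sup over S
  set d : X → X → V := fun x y => ⨆ c ∈ S, c x y with hddef
  have hled : ∀ c ∈ S, ∀ x y, c x y ≤ d x y := by
    intro c hc x y
    exact le_iSup₂ (f := fun c (_ : c ∈ S) => c x y) c hc
  -- closure: for c, c' ∈ S there is E ∈ S above both
  have hclos : ∀ c ∈ S, ∀ c' ∈ S, ∃ E ∈ S, (∀ x y, c x y ≤ E x y) ∧
      (∀ x y, c' x y ≤ E x y) := by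
    intro c hc c' hc'
    set T : Set (X → X → V) :=
      {e | IsVCat e ∧ (∀ x y, c x y ≤ e x y) ∧ (∀ x y, c' x y ≤ e x y)} with hTdef
    set E : X → X → V := fun x y => ⨅ e ∈ T, e x y with hEdef
    have hcE : ∀ x y, c x y ≤ E x y := by
      intro x y
      exact le_iInf₂ fun e he => he.2.1 x y
    have hc'E : ∀ x y, c' x y ≤ E x y := by
      intro x y
      exact le_iInf₂ fun e he => he.2.2 x y
    have hE : IsVCat E := by
      constructor
      · intro x
        exact le_iInf₂ fun e he => he.1.1 x
      · intro x y z
        refine le_iInf₂ fun e he => ?_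
        have h1 : E x y * E y z ≤ e x y * e y z :=
          hmul (iInf₂_le e he) (iInf₂_le e he)
        exact le_trans h1 (he.1.2 x y z)
    refine ⟨E, ⟨hE, fun x y => le_trans (hc.2.1 x y) (hcE x y), ?_⟩, hcE, hc'E⟩
    -- E is an α-coalgebra structure
    set m : X → X → V := fun x y => L.str E (α x) (α y) with hmdef
    have hLE := L.isVCat E hE
    have hm : m ∈ T := by
      refine ⟨⟨fun x => hLE.1 (α x), fun x y z => hLE.2 _ _ _⟩, ?_, ?_⟩
      · intro x y
        exact le_trans (hc.2.2 x y) (Lmono hc.1 hE hcE (α x) (α y))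
      · intro x y
        exact le_trans (hc'.2.2 x y) (Lmono hc'.1 hE hc'E (α x) (α y))
    intro x y
    exact iInf₂_le (f := fun e (_ : e ∈ T) => e x y) m hm
  -- d is a V-category
  have hd : IsVCat d := by
    constructor
    · intro x
      exact le_trans (ha.1 x) (hled a haS x x)
    · intro x y z
      refine hdistr (d x y) S (fun c' => c' y z) (d x z) ?_
      intro c' hc'
      rw [mul_comm]
      refine hdistr (c' y z) S (fun c => c x y) (d x z) ?_
      intro c hc
      rw [mul_comm]
      obtain ⟨E, hES, hcE, hc'E⟩ := hclos c hc c' hc'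
      calc c x y * c' y z ≤ E x y * E y z := hmul (hcE x y) (hc'E y z)
        _ ≤ E x z := hES.1.2 x y z
        _ ≤ d x z := hled E hES x z
  -- d ∈ S
  have hdS : d ∈ S := by
    refine ⟨hd, fun x y => le_trans (le_rfl.trans (haS.2.1 x y)) (hled a haS x y), ?_⟩
    intro x y
    refine iSup₂_le ?_
    intro c hc
    exact le_trans (hc.2.2 x y) (Lmono hc.1 hd (hled c hc) (α x) (α y))
  -- c* := L d pulled back along α
  set cs : X → X → V := fun x y => L.str d (α x) (α y) with hcsdef
  have hLd := L.isVCat d hd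
  have hcsV : IsVCat cs := ⟨fun x => hLd.1 (α x), fun x y z => hLd.2 _ _ _⟩
  have hdcs : ∀ x y, d x y ≤ cs x y := hdS.2.2
  have hcsS : cs ∈ S := by
    refine ⟨hcsV, fun x y => le_trans (haS.2.1 x y) (le_trans (hled a haS x y) (hdcs x y)), ?_⟩
    intro x y
    exact Lmono hd hcsV hdcs (α x) (α y)
  have hcsd : ∀ x y, cs x y ≤ d x y := hled cs hcsS
  have hdsym : ∀ x y, d x y = d y x := by
    intro x y
    have h1 : d x y = cs x y := le_antisymm (hdcs x y) (hcsd x y)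
    have h2 : d y x = cs y x := le_antisymm (hdcs y x) (hcsd y x)
    rw [h1, h2]
    exact hsymL X d hd (α x) (α y)
  intro x y
  rw [hbd' x y, hbd' y x]
  exact hdsym x y
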